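/- (Dephasing example, strategy using CSI) Let 0 ≤ ε₀ ≤ 1/2 ≤ ε₁ ≤ 1, 0 ≤ q ≤ 1/2, and 0 ≤ λ ≤ 1/2. Let Z be the Pauli phase-flip matrix on ℂ², let Φ_{AA'} be the two-qubit maximally entangled state, and consider the input state ρ_{SEA'A} = (1−q)|0⟩⟨0|_S ⊗ |0⟩⟨0|_E ⊗ [(1−λ)Φ_{AA'} + λ(𝟙⊗Z)Φ_{AA'}(𝟙⊗Z)] + q|1⟩⟨1|_S ⊗ |1⟩⟨1|_E ⊗ [(1−λ)(𝟙⊗Z)Φ_{AA'}(𝟙⊗Z) + λΦ_{AA'}], and let ρ_{SBA} be the output obtained by applying to A' the qubit dephasing channel P^{(s)}(σ) = (1−ε_s)σ + ε_s ZσZ conditioned on the value s of the state system E. Then, with ε̂ = (1−q)ε₀ + q(1−ε₁) and a∗b = (1−a)b + a(1−b): (i) I(A;S)_ρ = 0, (ii) I(A;B)_ρ = 2 − h₂(λ∗ε̂), and (iii) I(S;AB)_ρ = h₂(λ∗ε̂) − (1−q) h₂(λ∗ε₀) − q h₂(λ∗ε₁), where h₂(x) = −x log₂ x − (1−x) log₂(1−x)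 is the binary entropy function. -/

import Mathlib

noncomputable section
open scoped Kronecker ComplexOrder
open Matrix

namespace QMask

/-- von Neumann entropy, in bits (base-2 logarithm). -/
def vnEntropy {α : Type*} [Fintype α] [DecidableEq α] (ρ : Matrix α α ℂ) : ℝ :=
  letI := Classical.dec ρ.IsHermitian
  if h : ρ.IsHermitian then - ∑ i, h.eigenvalues i * Real.logb 2 (h.eigenvalues i) else 0

/-- The binary entropy function `h₂`. -/
def binEnt (x : ℝ) : ℝ := -x * Real.logb 2 x - (1 - x) * Real.logb 2 (1 - x)

/-- `a ∗ b = (1−a)b + a(1−b)`. -/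
def convStar (a b : ℝ) : ℝ := (1 - a) * b + a * (1 - b)

/-- The Pauli phase-flip matrix `Z = diag(1, −1)`. -/
def Zmat : Matrix (Fin 2) (Fin 2) ℂ := !![1, 0; 0, -1]

/-- The two-qubit maximally entangled vector `(|00⟩ + |11⟩)/√2`. -/
def phiVec : Fin 2 × Fin 2 → ℂ := fun p => if p.1 = p.2 then ((Real.sqrt 2)⁻¹ : ℝ) else 0

/-- The two-qubit maximally entangled state `Φ_{AA'}`. -/
def PhiAA : Matrix (Fin 2 × Fin 2) (Fin 2 × Fin 2) ℂ :=
  Matrix.of fun x y => phiVec x * star (phiVec y)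

/-- `(𝟙 ⊗ Z) M (𝟙 ⊗ Z)`. -/
def conjIZ (M : Matrix (Fin 2 × Fin 2) (Fin 2 × Fin 2) ℂ) :
    Matrix (Fin 2 × Fin 2) (Fin 2 × Fin 2) ℂ :=
  ((1 : Matrix (Fin 2) (Fin 2) ℂ) ⊗ₖ Zmat) * M * ((1 : Matrix (Fin 2) (Fin 2) ℂ) ⊗ₖ Zmat)

/-- Reduced state on `A` of a state indexed by `S × A × B`. -/
def rA (ρ : Matrix (Fin 2 × Fin 2 × Fin 2) (Fin 2 × Fin 2 × Fin 2) ℂ) :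
    Matrix (Fin 2) (Fin 2) ℂ :=
  Matrix.of fun x y => ∑ s : Fin 2, ∑ b : Fin 2, ρ (s, x, b) (s, y, b)

/-- Reduced state on `S`. -/
def rS (ρ : Matrix (Fin 2 × Fin 2 × Fin 2) (Fin 2 × Fin 2 × Fin 2) ℂ) :
    Matrix (Fin 2) (Fin 2) ℂ :=
  Matrix.of fun x y => ∑ a : Fin 2, ∑ b : Fin 2, ρ (x, a, b) (y, a, b)

/-- Reduced state on `B`. -/
def rB (ρ : Matrix (Fin 2 × Fin 2 × Fin 2) (Fin 2 × Fin 2 × Fin 2) ℂ) :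
    Matrix (Fin 2) (Fin 2) ℂ :=
  Matrix.of fun x y => ∑ s : Fin 2, ∑ a : Fin 2, ρ (s, a, x) (s, a, y)

/-- Reduced state on `S, A`. -/
def rSA (ρ : Matrix (Fin 2 × Fin 2 × Fin 2) (Fin 2 × Fin 2 × Fin 2) ℂ) :
    Matrix (Fin 2 × Fin 2) (Fin 2 × Fin 2) ℂ :=
  Matrix.of fun x y => ∑ b : Fin 2, ρ (x.1, x.2, b) (y.1, y.2, b)

/-- Reduced state on `A, B`. -/
def rAB (ρ : Matrix (Fin 2 × Fin 2 × Fin 2) (Fin 2 × Fin 2 × Fin 2) ℂ) :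
    Matrix (Fin 2 × Fin 2) (Fin 2 × Fin 2) ℂ :=
  Matrix.of fun x y => ∑ s : Fin 2, ρ (s, x.1, x.2) (s, y.1, y.2)

/-- `I(A;S)_ρ` for a state on `S × A × B`. -/
def iAS (ρ : Matrix (Fin 2 × Fin 2 × Fin 2) (Fin 2 × Fin 2 × Fin 2) ℂ) : ℝ :=
  vnEntropy (rA ρ) + vnEntropy (rS ρ) - vnEntropy (rSA ρ)

/-- `I(A;B)_ρ` for a state on `S × A × B`. -/
def iAB (ρ : Matrix (Fin 2 × Fin 2 × Fin 2) (Fin 2 × Fin 2 × Fin 2) ℂ) : ℝ :=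
  vnEntropy (rA ρ) + vnEntropy (rB ρ) - vnEntropy (rAB ρ)

/-- `I(S;AB)_ρ` for a state on `S × A × B`. -/
def iSAB (ρ : Matrix (Fin 2 × Fin 2 × Fin 2) (Fin 2 × Fin 2 × Fin 2) ℂ) : ℝ :=
  vnEntropy (rS ρ) + vnEntropy (rAB ρ) - vnEntropy ρ


/-! ### Auxiliary machinery -/

section CharpolyAux
open Polynomial

variable {n : Type*} [Fintype n] [DecidableEq n]

lemma charpoly_conj_unitary (U D : Matrix n n ℂ) (h1 : U * Uᴴ = 1) (h2 : Uᴴ * U = 1) :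
    (U * D * Uᴴ).charpoly = D.charpoly := by
  have hmap : ∀ (A B : Matrix n n ℂ), (A * B).map (C : ℂ →+* ℂ[X]) = A.map C * B.map C := by
    intro A B; exact Matrix.map_mul
  have hs : (scalar n) (X : ℂ[X]) = (X : ℂ[X]) • (1 : Matrix n n ℂ[X]) := by
    ext i j; by_cases h : i = j <;> simp [h, Matrix.one_apply]
  have key : charmatrix (U * D * Uᴴ) = U.map C * charmatrix D * (Uᴴ.map C) := by
    unfold charmatrix
    rw [Matrix.mul_sub, Matrix.sub_mul]
    congr 1
    · rw [hs, mul_smul_comm, smul_mul_assoc, mul_one, ← hmap, h1]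
      simp
    · simp only [RingHom.mapMatrix_apply]
      rw [← hmap, ← hmap]
  rw [Matrix.charpoly, key, det_mul, det_mul, mul_comm, ← mul_assoc, ← det_mul, ← hmap, h2]
  simp [Matrix.charpoly]

lemma charpoly_diagonal' (v : n → ℂ) :
    (Matrix.diagonal v).charpoly = ∏ i, (X - C (v i)) := by
  have : charmatrix (Matrix.diagonal v) = Matrix.diagonal (fun i => X - C (v i)) := by
    ext i j
    by_cases h : i = j
    · subst h; simp
    · rw [charmatrix_apply_ne _ _ _ h]
      simp [Matrix.diagonal_apply_ne _ h]
  rw [Matrix.charpoly, this, det_diagonal]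

lemma vnEntropy_of_diag (A U : Matrix n n ℂ) (h1 : U * Uᴴ = 1) (h2 : Uᴴ * U = 1)
    (d : n → ℝ) (hA : A = U * Matrix.diagonal (fun i => (d i : ℂ)) * Uᴴ) :
    vnEntropy A = ∑ i, -(d i * Real.logb 2 (d i)) := by
  have hDh : (Matrix.diagonal (fun i => (d i : ℂ)))ᴴ = Matrix.diagonal (fun i => (d i : ℂ)) := by
    ext i j
    by_cases h : i = j
    · subst h; simp [Matrix.conjTranspose_apply, Complex.conj_ofReal]
    · simp [Matrix.conjTranspose_apply, Matrix.diagonal_apply_ne _ h,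
        Matrix.diagonal_apply_ne _ (Ne.symm h)]
  have hH : A.IsHermitian := by
    rw [Matrix.IsHermitian, hA]
    rw [Matrix.conjTranspose_mul, Matrix.conjTranspose_mul, hDh, Matrix.conjTranspose_conjTranspose,
      mul_assoc]
  have hprod : ∀ g : n → ℂ, (Multiset.map (fun a => Polynomial.X - Polynomial.C a)
      (Finset.univ.val.map g)).prod = ∏ i, (Polynomial.X - Polynomial.C (g i)) := by
    intro g
    rw [Multiset.map_map]
    rfl
  have hUe1 : (hH.eigenvectorUnitary : Matrix n n ℂ) * (hH.eigenvectorUnitary : Matrix n n ℂ)ᴴ = 1 := by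
    rw [← Matrix.star_eq_conjTranspose]
    exact Matrix.mem_unitaryGroup_iff.mp hH.eigenvectorUnitary.2
  have hUe2 : (hH.eigenvectorUnitary : Matrix n n ℂ)ᴴ * (hH.eigenvectorUnitary : Matrix n n ℂ) = 1 := by
    rw [← Matrix.star_eq_conjTranspose]
    exact Matrix.mem_unitaryGroup_iff'.mp hH.eigenvectorUnitary.2
  have hc1 : A.charpoly = ∏ i, (Polynomial.X - Polynomial.C ((hH.eigenvalues i : ℂ))) := by
    conv_lhs => rw [hH.spectral_theorem]
    rw [Unitary.conjStarAlgAut_apply, Matrix.star_eq_conjTranspose, charpoly_conj_unitary _ _ hUe1 hUe2, charpoly_diagonal']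
    rfl
  have hc2 : A.charpoly = ∏ i, (Polynomial.X - Polynomial.C ((d i : ℂ))) := by
    rw [hA, charpoly_conj_unitary _ _ h1 h2, charpoly_diagonal']
  have hms : Finset.univ.val.map (fun i => ((hH.eigenvalues i : ℂ)))
      = Finset.univ.val.map (fun i => ((d i : ℂ))) := by
    have r1 := Polynomial.roots_multiset_prod_X_sub_C
      (Finset.univ.val.map (fun i => ((hH.eigenvalues i : ℂ))))
    have r2 := Polynomial.roots_multiset_prod_X_sub_C
      (Finset.univ.val.map (fun i => ((d i : ℂ))))
    rw [hprod] at r1 r2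
    rw [← r1, ← r2, ← hc1, ← hc2]
  have key : ∀ f : ℝ → ℝ, ∑ i, f (hH.eigenvalues i) = ∑ i, f (d i) := by
    intro f
    have := congrArg (fun m : Multiset ℂ => ((m.map (fun z : ℂ => f z.re)).sum)) hms
    simp only [Multiset.map_map, Function.comp] at this
    simpa [Complex.ofReal_re] using this
  rw [vnEntropy, dif_pos hH, ← Finset.sum_neg_distrib]
  exact key (fun x => -(x * Real.logb 2 x))

lemma vnEntropy_diagreal (d : n → ℝ) (M : Matrix n n ℂ)
    (hM : M = Matrix.diagonal (fun i => (d i : ℂ))) :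
    vnEntropy M = ∑ i, -(d i * Real.logb 2 (d i)) :=
  vnEntropy_of_diag M 1 (by simp) (by simp) d (by simp [hM])

end CharpolyAux

section ConcreteAux

def cc : ℂ := ((Real.sqrt 2)⁻¹ : ℝ)

lemma cc_mul_cc : cc * cc = 1/2 := by
  unfold cc
  rw [← Complex.ofReal_mul, ← mul_inv, Real.mul_self_sqrt (by norm_num)]
  norm_num

lemma star_cc : star cc = cc := Complex.conj_ofReal _
lemma conj_cc : (starRingEnd ℂ) cc = cc := Complex.conj_ofReal _
lemma cc_sq : cc ^ 2 = 1/2 := by rw [sq, cc_mul_cc]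

def psVec : Fin 2 × Fin 2 → ℂ := fun p =>
  if p = (0, 0) then cc else if p = (1, 1) then -cc else 0

def Phm : Matrix (Fin 2 × Fin 2) (Fin 2 × Fin 2) ℂ :=
  Matrix.of fun x y => psVec x * star (psVec y)

/-- explicit Bell mixture matrix -/
def Bm (p : ℝ) : Matrix (Fin 2 × Fin 2) (Fin 2 × Fin 2) ℂ :=
  Matrix.of fun x y =>
    if x.1 = x.2 ∧ y.1 = y.2 then (if x.1 = y.1 then (1/2 : ℂ) else (1 : ℂ)/2 - (p : ℂ)) else 0

lemma Bm_eq (p : ℝ) : (1 - p) • PhiAA + p • Phm = Bm p := by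
  apply Matrix.ext
  rintro ⟨a, b⟩ ⟨e, f⟩
  fin_cases a <;> fin_cases b <;> fin_cases e <;> fin_cases f <;>
    simp [Bm, PhiAA, Phm, phiVec, psVec, cc, Complex.conj_ofReal, ← Complex.ofReal_mul,
      ← mul_inv, Real.mul_self_sqrt (show (0:ℝ) ≤ 2 by norm_num)] <;>
    push_cast <;> ring

lemma conjIZ_PhiAA : conjIZ PhiAA = Phm := by
  apply Matrix.ext
  rintro ⟨a, b⟩ ⟨e, f⟩
  fin_cases a <;> fin_cases b <;> fin_cases e <;> fin_cases f <;>
    simp [conjIZ, PhiAA, Phm, phiVec, psVec, Zmat, Matrix.mul_apply, Fintype.sum_prod_type,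
      Fin.sum_univ_two, Matrix.one_apply, star_cc, cc, Complex.conj_ofReal] <;> ring

lemma conjIZ_Phm : conjIZ Phm = PhiAA := by
  apply Matrix.ext
  rintro ⟨a, b⟩ ⟨e, f⟩
  fin_cases a <;> fin_cases b <;> fin_cases e <;> fin_cases f <;>
    simp [conjIZ, PhiAA, Phm, phiVec, psVec, Zmat, Matrix.mul_apply, Fintype.sum_prod_type,
      Fin.sum_univ_two, Matrix.one_apply, star_cc, cc, Complex.conj_ofReal] <;> ring

lemma conjIZ_lin (a b : ℝ) (M N : Matrix (Fin 2 × Fin 2) (Fin 2 × Fin 2) ℂ) :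
    conjIZ (a • M + b • N) = a • conjIZ M + b • conjIZ N := by
  simp only [conjIZ, Matrix.mul_add, Matrix.add_mul, Matrix.mul_smul, Matrix.smul_mul]

def u4 : Matrix (Fin 2 × Fin 2) (Fin 2 × Fin 2) ℂ :=
  Matrix.of fun x y =>
    if y = (0, 0) then (if x.1 = x.2 then cc else 0)
    else if y = (1, 1) then (if x = (0, 0) then cc else if x = (1, 1) then -cc else 0)
    else if x = y then 1 else 0

/-- eigenvalue vector of `Bm p` -/
def dv (p : ℝ) : Fin 2 × Fin 2 → ℝ := fun y =>
  if y = (0, 0) then 1 - p else if y = (1, 1) then p else 0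

lemma u4_unitary₁ : u4 * u4ᴴ = 1 := by
  apply Matrix.ext
  rintro ⟨a, b⟩ ⟨e, f⟩
  fin_cases a <;> fin_cases b <;> fin_cases e <;> fin_cases f <;>
    simp [u4, Matrix.mul_apply, Fintype.sum_prod_type, Fin.sum_univ_two, Matrix.one_apply,
      Matrix.conjTranspose_apply, conj_cc, cc_mul_cc, Prod.ext_iff] <;> ring_nf <;>
    simp [cc_sq, conj_cc] <;> ring_nf <;> norm_num

lemma u4_unitary₂ : u4ᴴ * u4 = 1 := by
  apply Matrix.ext
  rintro ⟨a, b⟩ ⟨e, f⟩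
  fin_cases a <;> fin_cases b <;> fin_cases e <;> fin_cases f <;>
    simp [u4, Matrix.mul_apply, Fintype.sum_prod_type, Fin.sum_univ_two, Matrix.one_apply,
      Matrix.conjTranspose_apply, conj_cc, cc_mul_cc, Prod.ext_iff] <;> ring_nf <;>
    simp [cc_sq, conj_cc] <;> ring_nf <;> norm_num

lemma u4_diag (p : ℝ) :
    u4 * Matrix.diagonal (fun i => ((dv p i : ℝ) : ℂ)) * u4ᴴ = Bm p := by
  apply Matrix.ext
  rintro ⟨a, b⟩ ⟨e, f⟩
  fin_cases a <;> fin_cases b <;> fin_cases e <;> fin_cases f <;>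
    simp [u4, dv, Bm, Matrix.mul_apply, Fintype.sum_prod_type, Fin.sum_univ_two,
      Matrix.diagonal_apply, Matrix.conjTranspose_apply, conj_cc, cc_mul_cc, Prod.ext_iff] <;>
    ring_nf <;> simp [cc_sq, conj_cc] <;> ring_nf <;> norm_num

/-- block diagonal over classical index -/
def bd (f : Fin 2 → Matrix (Fin 2 × Fin 2) (Fin 2 × Fin 2) ℂ) :
    Matrix (Fin 2 × Fin 2 × Fin 2) (Fin 2 × Fin 2 × Fin 2) ℂ :=
  Matrix.of fun x y => if x.1 = y.1 then f x.1 x.2 y.2 else 0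

lemma bd_mul (f g : Fin 2 → Matrix (Fin 2 × Fin 2) (Fin 2 × Fin 2) ℂ) :
    bd f * bd g = bd (fun s => f s * g s) := by
  apply Matrix.ext
  rintro ⟨s, a⟩ ⟨t, b⟩
  simp only [bd, Matrix.mul_apply, Matrix.of_apply, Fintype.sum_prod_type]
  fin_cases s <;> fin_cases t <;>
    simp [Fin.sum_univ_two, Matrix.mul_apply]

lemma bd_conjT (f : Fin 2 → Matrix (Fin 2 × Fin 2) (Fin 2 × Fin 2) ℂ) :
    (bd f)ᴴ = bd (fun s => (f s)ᴴ) := by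
  apply Matrix.ext
  rintro ⟨s, a⟩ ⟨t, b⟩
  by_cases h : s = t
  · subst h; simp [bd, Matrix.conjTranspose_apply]
  · simp [bd, Matrix.conjTranspose_apply, h, Ne.symm h]

lemma bd_one : bd (fun _ => 1) = 1 := by
  apply Matrix.ext
  rintro ⟨s, a⟩ ⟨t, b⟩
  by_cases h : s = t
  · subst h
    by_cases h2 : a = b
    · subst h2; simp [bd, Matrix.one_apply]
    · simp only [bd, Matrix.of_apply, if_pos rfl, Matrix.one_apply, Prod.ext_iff]
      simp [h2]
      try exact fun _ h2' => absurd (Prod.ext (by simp) h2') h2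
  · simp [bd, Matrix.one_apply, h, Prod.ext_iff]

lemma bd_diagonal (v : Fin 2 → Fin 2 × Fin 2 → ℂ) :
    Matrix.diagonal (fun x : Fin 2 × Fin 2 × Fin 2 => v x.1 x.2)
      = bd (fun s => Matrix.diagonal (v s)) := by
  apply Matrix.ext
  rintro ⟨s, a⟩ ⟨t, b⟩
  by_cases h : s = t
  · subst h
    by_cases h2 : a = b
    · subst h2; simp [bd]
    · simp [bd, Matrix.diagonal_apply_ne, h2, Prod.ext_iff]
  · simp [bd, Matrix.diagonal_apply, h, Prod.ext_iff]

lemma vnEntropy_Bm (p : ℝ) (M : Matrix (Fin 2 × Fin 2) (Fin 2 × Fin 2) ℂ) (hM : M = Bm p) :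
    vnEntropy M = binEnt p := by
  rw [vnEntropy_of_diag M u4 u4_unitary₁ u4_unitary₂ (dv p) (by rw [hM, u4_diag])]
  rw [Fintype.sum_prod_type]
  simp only [Fin.sum_univ_two]
  simp [dv, Prod.ext_iff, binEnt]
  ring

lemma logb2_half : Real.logb 2 ((1:ℝ)/2) = -1 := by
  rw [one_div, Real.logb_inv, Real.logb_self_eq_one (by norm_num)]

lemma f_mul (a b : ℝ) (ha : 0 ≤ a) (hb : 0 ≤ b) :
    -(a * b * Real.logb 2 (a * b)) = b * -(a * Real.logb 2 a) + a * -(b * Real.logb 2 b) := by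
  rcases ha.eq_or_lt with h | h
  · simp [← h]
  rcases hb.eq_or_lt with h2 | h2
  · simp [← h2]
  rw [Real.logb_mul h.ne' h2.ne']
  ring

lemma diag_pull (r p : ℝ) :
    Matrix.diagonal (fun y : Fin 2 × Fin 2 => ((r * dv p y : ℝ) : ℂ))
      = r • Matrix.diagonal (fun y => ((dv p y : ℝ) : ℂ)) := by
  ext i j
  by_cases h : i = j
  · subst h
    simp [Matrix.smul_apply, Complex.real_smul]
    try push_cast
    try ring
  · simp [Matrix.diagonal_apply_ne _ h, Matrix.smul_apply]

lemma u4_diag_smul (r p : ℝ) :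
    r • Bm p = u4 * Matrix.diagonal (fun y : Fin 2 × Fin 2 => ((r * dv p y : ℝ) : ℂ)) * u4ᴴ := by
  rw [diag_pull, Matrix.mul_smul, Matrix.smul_mul, u4_diag]

end ConcreteAux

set_option maxHeartbeats 2000000

/-- dephasing example, strategy using CSI. -/
theorem dephasing_with_csi (ε₀ ε₁ q lam : ℝ)
    (hε₀ : 0 ≤ ε₀) (hε₀' : ε₀ ≤ 1/2) (hε₁ : 1/2 ≤ ε₁) (hε₁' : ε₁ ≤ 1)
    (hq : 0 ≤ q) (hq' : q ≤ 1/2) (hlam : 0 ≤ lam) (hlam' : lam ≤ 1/2) :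
    -- the `AA'`-input conditioned on the classical state `s`:
    -- a phase flip controlled by `S + Y mod 2` with `Y ∼ Bernoulli(λ)`
    let ρAA : Fin 2 → Matrix (Fin 2 × Fin 2) (Fin 2 × Fin 2) ℂ :=
      ![(1 - lam) • PhiAA + lam • conjIZ PhiAA,
        (1 - lam) • conjIZ PhiAA + lam • PhiAA]
    -- the dephasing parameter as a function of the classical state `s`
    let eps : Fin 2 → ℝ := ![ε₀, ε₁]
    -- the distribution of the classical state `S`
    let qd : Fin 2 → ℝ := ![1 - q, q]
    -- the output state `ρ_{SAB} = Σ_s q(s)|s⟩⟨s|_S ⊗ (id_A ⊗ P^{(s)})(ρ_{AA'}^{(s)})`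
    let ρSAB : Matrix (Fin 2 × Fin 2 × Fin 2) (Fin 2 × Fin 2 × Fin 2) ℂ :=
      Matrix.of fun x y =>
        if x.1 = y.1 then
          (qd x.1 : ℂ) *
            ((1 - eps x.1) • ρAA x.1 + (eps x.1) • conjIZ (ρAA x.1)) x.2 y.2
        else 0
    let εhat : ℝ := (1 - q) * ε₀ + q * (1 - ε₁)
    iAS ρSAB = 0 ∧
    iAB ρSAB = 2 - binEnt (convStar lam εhat) ∧
    iSAB ρSAB = binEnt (convStar lam εhat)
      - (1 - q) * binEnt (convStar lam ε₀) - q * binEnt (convStar lam ε₁) := by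
  intro ρAA eps qd ρSAB εhat
  have hq1 : (0:ℝ) ≤ 1 - q := by linarith
  have hc0a : 0 ≤ convStar lam ε₀ := by unfold convStar; nlinarith
  have hc0b : convStar lam ε₀ ≤ 1 := by unfold convStar; nlinarith
  have hc1a : 0 ≤ convStar lam ε₁ := by unfold convStar; nlinarith
  have hc1b : convStar lam ε₁ ≤ 1 := by unfold convStar; nlinarith
  -- channel outputs
  have hOut : ∀ s : Fin 2, (1 - eps s) • ρAA s + eps s • conjIZ (ρAA s)
      = Bm (![convStar lam ε₀, 1 - convStar lam ε₁] s) := by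
    intro s
    fin_cases s
    · show (1 - ε₀) • ((1 - lam) • PhiAA + lam • conjIZ PhiAA)
        + ε₀ • conjIZ ((1 - lam) • PhiAA + lam • conjIZ PhiAA) = _
      rw [conjIZ_PhiAA, conjIZ_lin, conjIZ_PhiAA, conjIZ_Phm]
      show _ = Bm (convStar lam ε₀)
      rw [← Bm_eq]
      match_scalars <;> (unfold convStar; push_cast; ring)
    · show (1 - ε₁) • ((1 - lam) • conjIZ PhiAA + lam • PhiAA)
        + ε₁ • conjIZ ((1 - lam) • conjIZ PhiAA + lam • PhiAA) = _
      rw [conjIZ_PhiAA, conjIZ_lin, conjIZ_PhiAA, conjIZ_Phm]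
      show _ = Bm (1 - convStar lam ε₁)
      rw [← Bm_eq]
      match_scalars <;> (unfold convStar; push_cast; ring)
  -- block-diagonal form of the output state
  have hρ : ρSAB = bd (fun s => (![1 - q, q] s : ℝ) • Bm (![convStar lam ε₀, 1 - convStar lam ε₁] s)) := by
    apply Matrix.ext
    rintro ⟨s, x⟩ ⟨t, y⟩
    show (if s = t then (qd s : ℂ)
        * ((1 - eps s) • ρAA s + eps s • conjIZ (ρAA s)) x y else 0) = _
    rw [hOut s]
    by_cases h : s = t
    · subst h
      simp only [bd, Matrix.of_apply, if_pos rfl, Matrix.smul_apply]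
      rw [show qd s = ![1 - q, q] s from rfl, Complex.real_smul]
    · simp [bd, h]
  -- entropy of the full state
  have hd8 : ρSAB = bd (fun _ => u4) * Matrix.diagonal
      (fun x : Fin 2 × Fin 2 × Fin 2 =>
        ((![1 - q, q] x.1 * dv (![convStar lam ε₀, 1 - convStar lam ε₁] x.1) x.2 : ℝ) : ℂ))
      * (bd (fun _ => u4))ᴴ := by
    have hdg := bd_diagonal (fun s y =>
      ((![1 - q, q] s * dv (![convStar lam ε₀, 1 - convStar lam ε₁] s) y : ℝ) : ℂ))
    rw [bd_conjT, hdg, bd_mul, bd_mul, hρ]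
    exact congrArg bd (funext fun s => u4_diag_smul _ _)
  have hU8a : bd (fun _ => u4) * (bd (fun _ => u4))ᴴ = 1 := by
    rw [bd_conjT, bd_mul]
    simp only [u4_unitary₁]
    exact bd_one
  have hU8b : (bd (fun _ => u4))ᴴ * bd (fun _ => u4) = 1 := by
    rw [bd_conjT, bd_mul]
    simp only [u4_unitary₂]
    exact bd_one
  have eρ : vnEntropy ρSAB = binEnt q + (1 - q) * binEnt (convStar lam ε₀)
      + q * binEnt (convStar lam ε₁) := by
    rw [vnEntropy_of_diag ρSAB (bd (fun _ => u4)) hU8a hU8b _ hd8]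
    rw [Fintype.sum_prod_type]
    simp only [Fin.sum_univ_two, Fintype.sum_prod_type]
    simp only [Matrix.cons_val_zero, Matrix.cons_val_one, Matrix.head_cons, dv]
    norm_num [Prod.ext_iff]
    rw [f_mul (1 - q) (1 - convStar lam ε₀) hq1 (by linarith),
      f_mul (1 - q) (convStar lam ε₀) hq1 hc0a,
      f_mul q (convStar lam ε₁) hq hc1a,
      f_mul q (1 - convStar lam ε₁) hq (by linarith)]
    unfold binEnt
    ring
  -- reduced states
  have hrA : rA ρSAB = Matrix.diagonal (fun _ : Fin 2 => (((1:ℝ)/2 : ℝ) : ℂ)) := by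
    rw [hρ]
    apply Matrix.ext
    intro x y
    fin_cases x <;> fin_cases y <;>
      simp [rA, bd, Bm, Fin.sum_univ_two, Matrix.smul_apply, Complex.real_smul,
        Matrix.diagonal_apply, Prod.ext_iff] <;> push_cast <;> ring
  have hrB : rB ρSAB = Matrix.diagonal (fun _ : Fin 2 => (((1:ℝ)/2 : ℝ) : ℂ)) := by
    rw [hρ]
    apply Matrix.ext
    intro x y
    fin_cases x <;> fin_cases y <;>
      simp [rB, bd, Bm, Fin.sum_univ_two, Matrix.smul_apply, Complex.real_smul,
        Matrix.diagonal_apply, Prod.ext_iff] <;> push_cast <;> ring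
  have hrS : rS ρSAB = Matrix.diagonal (fun i : Fin 2 => ((![1 - q, q] i : ℝ) : ℂ)) := by
    rw [hρ]
    apply Matrix.ext
    intro x y
    fin_cases x <;> fin_cases y <;>
      simp [rS, bd, Bm, Fin.sum_univ_two, Matrix.smul_apply, Complex.real_smul,
        Matrix.diagonal_apply, Prod.ext_iff] <;> push_cast <;> ring
  have hrSA : rSA ρSAB = Matrix.diagonal
      (fun x : Fin 2 × Fin 2 => ((![1 - q, q] x.1 * (1/2 : ℝ) : ℝ) : ℂ)) := by
    rw [hρ]
    apply Matrix.ext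
    rintro ⟨s, a⟩ ⟨t, b⟩
    fin_cases s <;> fin_cases a <;> fin_cases t <;> fin_cases b <;>
      simp [rSA, bd, Bm, Fin.sum_univ_two, Matrix.smul_apply, Complex.real_smul,
        Matrix.diagonal_apply, Prod.ext_iff] <;> push_cast <;> ring
  have hrAB : rAB ρSAB = Bm ((1 - q) * convStar lam ε₀ + q * (1 - convStar lam ε₁)) := by
    rw [hρ]
    apply Matrix.ext
    rintro ⟨s, a⟩ ⟨t, b⟩
    fin_cases s <;> fin_cases a <;> fin_cases t <;> fin_cases b <;>
      simp [rAB, bd, Bm, Fin.sum_univ_two, Matrix.smul_apply, Complex.real_smul,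
        Matrix.diagonal_apply, Prod.ext_iff] <;> push_cast <;> ring
  -- entropies of reduced states
  have eA : vnEntropy (rA ρSAB) = 1 := by
    rw [vnEntropy_diagreal (fun _ : Fin 2 => ((1:ℝ)/2)) _ hrA]
    simp [Fin.sum_univ_two, logb2_half]
    try norm_num
  have eB : vnEntropy (rB ρSAB) = 1 := by
    rw [vnEntropy_diagreal (fun _ : Fin 2 => ((1:ℝ)/2)) _ hrB]
    simp [Fin.sum_univ_two, logb2_half]
    try norm_num
  have eS : vnEntropy (rS ρSAB) = binEnt q := by
    rw [vnEntropy_diagreal ![1 - q, q] _ hrS]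
    simp [Fin.sum_univ_two]
    unfold binEnt
    ring
  have eSA : vnEntropy (rSA ρSAB) = 1 + binEnt q := by
    rw [vnEntropy_diagreal (fun x : Fin 2 × Fin 2 => ![1 - q, q] x.1 * (1/2 : ℝ)) _ hrSA]
    rw [Fintype.sum_prod_type]
    simp only [Fin.sum_univ_two, Matrix.cons_val_zero, Matrix.cons_val_one, Matrix.head_cons]
    rw [f_mul (1 - q) (1/2) hq1 (by norm_num), f_mul q (1/2) hq (by norm_num)]
    rw [logb2_half]
    unfold binEnt
    ring
  have harg : (1 - q) * convStar lam ε₀ + q * (1 - convStar lam ε₁) = convStar lam εhat := by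
    show _ = convStar lam ((1 - q) * ε₀ + q * (1 - ε₁))
    unfold convStar
    ring
  have eAB : vnEntropy (rAB ρSAB) = binEnt (convStar lam εhat) := by
    rw [vnEntropy_Bm _ _ hrAB, harg]
  refine ⟨?_, ?_, ?_⟩
  · unfold iAS
    rw [eA, eS, eSA]
    ring
  · unfold iAB
    rw [eA, eB, eAB]
    ring
  · unfold iSAB
    rw [eS, eAB, eρ]
    have hsym : binEnt (1 - convStar lam ε₁) = binEnt (convStar lam ε₁) := by
      unfold binEnt
      rw [sub_sub_cancel]
      ring
    ring

end QMask
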